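/- Let e > 1 be odd, q = 2^e. The expression d_2 = (1/e)·Σ_{f | e} μ(e/f)·2^f·(2^(4f) − 2^(3f) − 9) is a nonnegative integer, where μ is the classical Möbius function. -/

import Mathlib

open Finset ArithmeticFunction ArithmeticFunction.Moebius

private lemma fermat_lift (p : ℕ) (hp : p.Prime) (k : ℕ) (b : ℤ) :
    ((p : ℤ)) ^ (k + 1) ∣ b ^ p ^ (k + 1) - b ^ p ^ k := by
  have hp' : Fact p.Prime := ⟨hp⟩
  have h1 : (p : ℤ) ∣ b ^ p - b := by
    have : ((b ^ p - b : ℤ) : ZMod p) = 0 := by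
      push_cast
      rw [ZMod.pow_card]; ring
    exact (ZMod.intCast_zmod_eq_zero_iff_dvd _ _).mp this
  have h2 := dvd_sub_pow_of_dvd_sub h1 k
  rwa [← pow_mul, ← pow_succ'] at h2

private lemma sum_divisors_coprime_mul {m n : ℕ} (h : Nat.Coprime m n) (F : ℕ → ℤ) :
    ∑ d ∈ (m * n).divisors, F d
      = ∑ q ∈ m.divisors ×ˢ n.divisors, F (q.1 * q.2) := by
  refine (Finset.sum_nbij' (fun q => q.1 * q.2) (fun d => (d.gcd m, d.gcd n)) ?_ ?_ ?_ ?_ ?_).symm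
  · rintro ⟨i, j⟩ hq
    simp only [Finset.mem_product, Nat.mem_divisors] at hq ⊢
    exact ⟨mul_dvd_mul hq.1.1 hq.2.1, mul_ne_zero hq.1.2 hq.2.2⟩
  · intro d hd
    simp only [Nat.mem_divisors, mul_ne_zero_iff] at hd
    simp only [Finset.mem_product, Nat.mem_divisors]
    exact ⟨⟨Nat.gcd_dvd_right d m, hd.2.1⟩, ⟨Nat.gcd_dvd_right d n, hd.2.2⟩⟩
  · rintro ⟨i, j⟩ hq
    simp only [Finset.mem_product, Nat.mem_divisors] at hq
    have hij : Nat.Coprime i j :=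
      Nat.Coprime.coprime_dvd_left hq.1.1 (Nat.Coprime.coprime_dvd_right hq.2.1 h)
    have h1 : (i * j).gcd m = i := by
      rw [Nat.gcd_comm, Nat.Coprime.gcd_mul _ hij, Nat.gcd_eq_right hq.1.1,
        Nat.Coprime.gcd_eq_one (Nat.Coprime.coprime_dvd_right hq.2.1 h), mul_one]
    have h2 : (i * j).gcd n = j := by
      rw [Nat.gcd_comm, Nat.Coprime.gcd_mul _ hij, Nat.gcd_eq_right hq.2.1,
        Nat.Coprime.gcd_eq_one (Nat.Coprime.coprime_dvd_left hq.1.1 h).symm, one_mul]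
    simp [h1, h2]
  · intro d hd
    simp only [Nat.mem_divisors] at hd
    show d.gcd m * d.gcd n = d
    rw [← Nat.Coprime.gcd_mul _ h, Nat.gcd_eq_left hd.1]
  · intro d hd; rfl

private lemma gauss_prime_pow {p : ℕ} (hp : p.Prime) (k m : ℕ) (hm : m ≠ 0)
    (hcop : Nat.Coprime p m) (a : ℤ) :
    (p : ℤ) ^ (k + 1) ∣
      ∑ d ∈ (p ^ (k + 1) * m).divisors, μ ((p ^ (k + 1) * m) / d) * a ^ d := by
  have hcop' : Nat.Coprime (p ^ (k + 1)) m := Nat.Coprime.pow_left _ hcop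
  rw [sum_divisors_coprime_mul hcop', Finset.sum_product]
  rw [Nat.sum_divisors_prime_pow hp]
  -- now: ∑ i ∈ range (k+2), ∑ j ∈ m.divisors, μ ((p^(k+1)*m)/(p^i * j)) * a^(p^i * j)
  have key : ∀ i ∈ Finset.range (k + 2), ∀ j ∈ m.divisors,
      μ ((p ^ (k + 1) * m) / (p ^ i * j)) * a ^ (p ^ i * j)
        = (μ (p ^ (k + 1 - i)) : ℤ) * (μ (m / j) * (a ^ j) ^ p ^ i) := by
    intro i hi j hj
    simp only [Finset.mem_range] at hi
    simp only [Nat.mem_divisors] at hj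
    have hij : (p ^ (k + 1) * m) / (p ^ i * j) = p ^ (k + 1 - i) * (m / j) := by
      rcases hj.1 with ⟨c, rfl⟩
      have hj0 : j ≠ 0 := fun h => hj.2 (by simp [h])
      have hjpos : 0 < j := Nat.pos_of_ne_zero hj0
      have hpos : 0 < p ^ i * j := Nat.mul_pos (Nat.pow_pos hp.pos) hjpos
      have hpp : p ^ i * p ^ (k + 1 - i) = p ^ (k + 1) := by
        rw [← pow_add]; congr 1; omega
      have heq : p ^ (k + 1) * (j * c) = (p ^ i * j) * (p ^ (k + 1 - i) * c) := by
        rw [← hpp]; ring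
      rw [heq, Nat.mul_div_cancel_left _ hpos, Nat.mul_div_cancel_left c hjpos]
    rw [hij]
    have hcop2 : Nat.Coprime (p ^ (k + 1 - i)) (m / j) :=
      Nat.Coprime.pow_left _ (Nat.Coprime.coprime_dvd_right (Nat.div_dvd_of_dvd hj.1) hcop)
    rw [isMultiplicative_moebius.map_mul_of_coprime hcop2]
    push_cast
    rw [mul_comm (p ^ i) j, pow_mul]
    ring
  rw [Finset.sum_congr rfl (fun i hi => Finset.sum_congr rfl (key i hi))]
  simp only [← Finset.mul_sum]
  -- split the outer sum: terms with i ≤ k-1 vanish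
  rw [Finset.sum_range_succ, Finset.sum_range_succ]
  have hzero : ∀ i ∈ Finset.range k,
      (μ (p ^ (k + 1 - i)) : ℤ) * ∑ j ∈ m.divisors, μ (m / j) * (a ^ j) ^ p ^ i = 0 := by
    intro i hi
    simp only [Finset.mem_range] at hi
    rw [moebius_apply_prime_pow hp (by omega), if_neg (by omega)]
    simp
  rw [Finset.sum_eq_zero hzero, zero_add]
  have h1 : k + 1 - k = 1 := by omega
  have h2 : k + 1 - (k + 1) = 0 := by omega
  rw [h1, h2, pow_one, pow_zero, moebius_apply_one, moebius_apply_prime hp]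
  push_cast
  rw [neg_one_mul, one_mul, neg_add_eq_sub, ← Finset.sum_sub_distrib]
  refine Finset.dvd_sum fun j hj => ?_
  have heq2 : (μ (m / j) : ℤ) * (a ^ j) ^ p ^ (k + 1) - (μ (m / j) : ℤ) * (a ^ j) ^ p ^ k
      = (μ (m / j) : ℤ) * ((a ^ j) ^ p ^ (k + 1) - (a ^ j) ^ p ^ k) := by ring
  rw [heq2]
  exact Dvd.dvd.mul_left (fermat_lift p hp k (a ^ j)) _

private lemma gauss_congruence (n : ℕ) (hn : n ≠ 0) (a : ℤ) :
    (n : ℤ) ∣ ∑ d ∈ n.divisors, μ (n / d) * a ^ d := by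
  have key : ∀ p ∈ n.primeFactors,
      (p : ℤ) ^ n.factorization p ∣ ∑ d ∈ n.divisors, μ (n / d) * a ^ d := by
    intro p hp
    have hp' := Nat.prime_of_mem_primeFactors hp
    have hk : n.factorization p ≠ 0 :=
      (hp'.factorization_pos_of_dvd hn (Nat.dvd_of_mem_primeFactors hp)).ne'
    obtain ⟨k', hk'⟩ : ∃ k', n.factorization p = k' + 1 := ⟨n.factorization p - 1, by omega⟩
    have hpd := Nat.ordProj_mul_ordCompl_eq_self n p
    have := gauss_prime_pow hp' k' (n / p ^ n.factorization p)
      (Nat.ordCompl_pos p hn).ne' (Nat.coprime_ordCompl hp' hn) a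
    rwa [← hk', hpd] at this
  have hfact := Nat.factorization_prod_pow_eq_self hn
  have hcast : (n : ℤ) = ∏ p ∈ n.primeFactors, (p : ℤ) ^ n.factorization p := by
    conv_lhs => rw [← hfact]
    rw [Nat.prod_factorization_eq_prod_primeFactors]
    push_cast
    rfl
  rw [hcast]
  refine Finset.prod_dvd_of_coprime ?_ key
  intro p hps q hqs hpq
  simp only [Finset.mem_coe] at *
  exact (IsCoprime.pow (Nat.isCoprime_iff_coprime.mpr
    ((Nat.coprime_primes (Nat.prime_of_mem_primeFactors hps)
      (Nat.prime_of_mem_primeFactors hqs)).mpr hpq)))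

open ArithmeticFunction ArithmeticFunction.Moebius in
theorem suzuki_d2_nonneg_integer (e : ℕ) (he : Odd e) (he1 : 1 < e) :
    ∃ n : ℕ,
      ∑ f ∈ e.divisors, (μ (e / f) * 2 ^ f * (2 ^ (4 * f) - 2 ^ (3 * f) - 9) : ℤ)
        = e * n := by
  have he0 : e ≠ 0 := by omega
  have he3 : 3 ≤ e := by rcases he with ⟨k, hk⟩; omega
  set S : ℤ := ∑ f ∈ e.divisors, (μ (e / f) * 2 ^ f * (2 ^ (4 * f) - 2 ^ (3 * f) - 9) : ℤ)
    with hS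
  -- Step 1: divisibility
  have hsum : S = (∑ f ∈ e.divisors, μ (e / f) * 32 ^ f)
      - (∑ f ∈ e.divisors, μ (e / f) * 16 ^ f)
      - 9 * ∑ f ∈ e.divisors, μ (e / f) * 2 ^ f := by
    rw [hS, Finset.mul_sum, ← Finset.sum_sub_distrib, ← Finset.sum_sub_distrib]
    refine Finset.sum_congr rfl fun d _ => ?_
    have e1 : (32 : ℤ) ^ d = 2 ^ d * 2 ^ (4 * d) := by
      rw [← pow_add, show (32 : ℤ) = 2 ^ 5 by norm_num, ← pow_mul]
      congr 1; ring
    have e2 : (16 : ℤ) ^ d = 2 ^ d * 2 ^ (3 * d) := by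
      rw [← pow_add, show (16 : ℤ) = 2 ^ 4 by norm_num, ← pow_mul]
      congr 1; ring
    rw [e1, e2]; ring
  have hdvd : (e : ℤ) ∣ S := by
    rw [hsum]
    exact dvd_sub (dvd_sub (gauss_congruence e he0 32) (gauss_congruence e he0 16))
      (Dvd.dvd.mul_left (gauss_congruence e he0 2) 9)
  -- Step 2: nonnegativity
  set x : ℤ := 2 ^ e with hx
  have hx8 : (8 : ℤ) ≤ x := by
    calc (8 : ℤ) = 2 ^ 3 := by norm_num
    _ ≤ 2 ^ e := pow_le_pow_right₀ (by norm_num) he3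
  have hterm : ∀ d ∈ e.properDivisors,
      -(4 * x ^ 2) ≤ (μ (e / d) * 2 ^ d * (2 ^ (4 * d) - 2 ^ (3 * d) - 9) : ℤ) := by
    intro d hd
    rw [Nat.mem_properDivisors] at hd
    have hd0 : 0 < d := Nat.pos_of_dvd_of_pos hd.1 (by omega)
    have h3d : 3 * d ≤ e := by
      obtain ⟨c, hc⟩ := hd.1
      have hc1 : c ≠ 1 := by rintro rfl; omega
      have hc2 : c ≠ 2 := by
        rintro rfl
        rcases he with ⟨k, hk⟩; omega
      have hc0 : c ≠ 0 := by rintro rfl; omega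
      have : 3 ≤ c := by omega
      calc 3 * d ≤ c * d := by exact Nat.mul_le_mul_right d this
        _ = e := (mul_comm c d).trans hc.symm
    set y : ℤ := 2 ^ d with hy
    have hy2 : (2 : ℤ) ≤ y := by
      calc (2 : ℤ) = 2 ^ 1 := by norm_num
      _ ≤ 2 ^ d := pow_le_pow_right₀ (by norm_num) hd0
    have hyx : y ^ 3 ≤ x := by
      rw [hy, hx, ← pow_mul, mul_comm]
      exact pow_le_pow_right₀ (by norm_num) h3d
    have e4 : (2 : ℤ) ^ (4 * d) = y ^ 4 := by rw [hy, ← pow_mul, mul_comm]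
    have e3 : (2 : ℤ) ^ (3 * d) = y ^ 3 := by rw [hy, ← pow_mul, mul_comm]
    rw [e4, e3]
    have hy0 : (0 : ℤ) < y := by linarith
    have hx0 : (0 : ℤ) < x := by linarith
    have hyx1 : y ≤ x := by
      nlinarith [mul_nonneg (mul_nonneg hy0.le (by linarith : (0:ℤ) ≤ y - 1))
        (by linarith : (0:ℤ) ≤ y + 1), hyx]
    have hsq : (y ^ 3) ^ 2 ≤ x ^ 2 := pow_le_pow_left₀ (by positivity) hyx 2
    rcases moebius_eq_or (e / d) with h | h | h <;> rw [h]
    · nlinarith [sq_nonneg x, sq_nonneg y]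
    · nlinarith [mul_nonneg (pow_nonneg hy0.le 3) (by linarith : (0:ℤ) ≤ y - 1),
        mul_nonneg (by linarith : (0:ℤ) ≤ x - 8) hx0.le, hyx1, hx8]
    · nlinarith [hsq, mul_nonneg (pow_nonneg hy0.le 5) (by linarith : (0:ℤ) ≤ y - 1),
        pow_nonneg hy0.le 4, sq_nonneg x, hy0.le]
  have hcard : (e.properDivisors.card : ℤ) ≤ x := by
    have h1 : e.properDivisors.card ≤ e := by
      calc e.properDivisors.card ≤ (Finset.range e).card :=
        Finset.card_le_card fun m hm => Finset.mem_range.mpr (Nat.mem_properDivisors.mp hm).2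
      _ = e := Finset.card_range e
    have h2 : (e : ℤ) ≤ 2 ^ e := by
      exact_mod_cast (Nat.lt_two_pow_self (n := e)).le
    calc (e.properDivisors.card : ℤ) ≤ (e : ℤ) := by exact_mod_cast h1
    _ ≤ x := h2
  have hrest : -(x * (4 * x ^ 2)) ≤
      ∑ d ∈ e.properDivisors, (μ (e / d) * 2 ^ d * (2 ^ (4 * d) - 2 ^ (3 * d) - 9) : ℤ) := by
    have := Finset.card_nsmul_le_sum e.properDivisors _ _ hterm
    rw [nsmul_eq_mul] at this
    calc -(x * (4 * x ^ 2)) ≤ (e.properDivisors.card : ℤ) * (-(4 * x ^ 2)) := by nlinarith [sq_nonneg x]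
    _ ≤ _ := this
  have hSsplit : S = 2 ^ e * (2 ^ (4 * e) - 2 ^ (3 * e) - 9)
      + ∑ d ∈ e.properDivisors, (μ (e / d) * 2 ^ d * (2 ^ (4 * d) - 2 ^ (3 * d) - 9) : ℤ) := by
    rw [hS, ← Nat.insert_self_properDivisors he0, Finset.sum_insert
      (fun h => absurd (Nat.mem_properDivisors.mp h).2 (lt_irrefl e)),
      Nat.div_self (by omega : 0 < e), moebius_apply_one]
    push_cast
    ring
  have hSnn : 0 ≤ S := by
    rw [hSsplit]
    have e4 : (2 : ℤ) ^ (4 * e) = x ^ 4 := by rw [hx, ← pow_mul, mul_comm]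
    have e3 : (2 : ℤ) ^ (3 * e) = x ^ 3 := by rw [hx, ← pow_mul, mul_comm]
    rw [e4, e3, ← hx]
    have hx0 : (0 : ℤ) < x := by linarith
    nlinarith [hrest, hx8, mul_nonneg (by linarith : (0:ℤ) ≤ x - 8) (pow_nonneg hx0.le 4),
      mul_nonneg (by linarith : (0:ℤ) ≤ x - 8) (pow_nonneg hx0.le 3),
      mul_nonneg (by linarith : (0:ℤ) ≤ x - 8) (pow_nonneg hx0.le 2),
      mul_nonneg (by linarith : (0:ℤ) ≤ x - 8) hx0.le]
  obtain ⟨t, ht⟩ := hdvd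
  have ht0 : 0 ≤ t := by
    by_contra h
    push_neg at h
    have : S < 0 := by
      rw [ht]
      have : (0 : ℤ) < e := by exact_mod_cast Nat.pos_of_ne_zero he0
      exact mul_neg_of_pos_of_neg this h
    omega
  exact ⟨t.toNat, by rw [ht, Int.toNat_of_nonneg ht0]⟩
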